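/- Gentle Measurement Lemma (Lemma 2 of the paper): Let ρ be a d×d complex density matrix and let Λ be a d×d complex matrix with 0 ≤ Λ ≤ I in the Loewner order. Suppose Re(tr(Λρ)) ≥ 1 − δ for some δ with 0 ≤ δ ≤ 1, and tr(Λρ) ≠ 0. Then the normalized post-measurement state ρ̃ = (√Λ · ρ · √Λ) / tr(Λρ), where √Λ is the positive semidefinite square root of Λ, satisfies ‖ρ − ρ̃‖₁ ≤ 2√δ. -/

import Mathlib

open Matrix ComplexOrder

/-- The positive semidefinite square root of a positive semidefinite matrix
(the definition `Matrix.PosSemidef.sqrt` of the older Mathlib, since removed). -/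
noncomputable def Matrix.PosSemidef.sqrt {n 𝕜 : Type*} [Fintype n] [DecidableEq n] [RCLike 𝕜]
    {A : Matrix n n 𝕜} (hA : A.PosSemidef) : Matrix n n 𝕜 :=
  hA.1.eigenvectorUnitary.1 * diagonal ((↑) ∘ Real.sqrt ∘ hA.1.eigenvalues) *
  (star hA.1.eigenvectorUnitary : Matrix n n 𝕜)

/-- The trace norm of a complex square matrix: the trace of the positive
semidefinite square root of `Aᴴ * A`. -/
noncomputable def traceNorm {d : ℕ} (A : Matrix (Fin d) (Fin d) ℂ) : ℝ :=
  ((Matrix.posSemidef_conjTranspose_mul_self A).sqrt.trace).re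

section GentlePort
open scoped MatrixOrder

lemma Matrix.PosSemidef.sqrt_eq_cfc {n : Type*} [Fintype n] [DecidableEq n]
    {A : Matrix n n ℂ} (hA : A.PosSemidef) : hA.sqrt = CFC.sqrt A := by
  rw [CFC.sqrt_eq_cfc, cfc_nnreal_eq_real _ A hA.nonneg, hA.1.cfc_eq]
  simp only [Matrix.IsHermitian.cfc, Unitary.conjStarAlgAut_apply, Matrix.PosSemidef.sqrt]
  congr 3
  funext i
  simp [Real.coe_sqrt, hA.eigenvalues_nonneg i]

lemma Matrix.PosSemidef.posSemidef_sqrt {n : Type*} [Fintype n] [DecidableEq n]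
    {A : Matrix n n ℂ} (hA : A.PosSemidef) : hA.sqrt.PosSemidef := by
  rw [hA.sqrt_eq_cfc]; exact (CFC.sqrt_nonneg A).posSemidef

lemma Matrix.PosSemidef.sqrt_mul_self {n : Type*} [Fintype n] [DecidableEq n]
    {A : Matrix n n ℂ} (hA : A.PosSemidef) : hA.sqrt * hA.sqrt = A := by
  rw [hA.sqrt_eq_cfc]; exact CFC.sqrt_mul_sqrt_self A hA.nonneg

lemma Matrix.PosSemidef.eq_sqrt_of_sq_eq {n : Type*} [Fintype n] [DecidableEq n]
    {A B : Matrix n n ℂ} (hA : A.PosSemidef) (hB : B.PosSemidef) (hAB : A ^ 2 = B) :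
    A = hB.sqrt := by
  rw [hB.sqrt_eq_cfc, ← hAB, CFC.sqrt_sq A hA.nonneg]

lemma Matrix.IsHermitian.star_mul_self_mul_eq_diagonal {n : Type*} [Fintype n] [DecidableEq n]
    {A : Matrix n n ℂ} (hA : A.IsHermitian) :
    star (hA.eigenvectorUnitary : Matrix n n ℂ) * A * (hA.eigenvectorUnitary : Matrix n n ℂ)
      = diagonal (RCLike.ofReal ∘ hA.eigenvalues) := by
  have := hA.conjStarAlgAut_star_eigenvectorUnitary
  rwa [Unitary.conjStarAlgAut_star_apply] at this

end GentlePort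

namespace GentleAux

variable {d : ℕ}

/-- Diagonal entries of a PSD complex matrix are nonneg (in `ComplexOrder`). -/
lemma diag_nonneg {M : Matrix (Fin d) (Fin d) ℂ} (hM : M.PosSemidef) (i : Fin d) :
    0 ≤ M i i := by
  exact hM.diag_nonneg

/-- The trace of a PSD matrix is a nonnegative real. -/
lemma trace_re_nonneg {M : Matrix (Fin d) (Fin d) ℂ} (hM : M.PosSemidef) :
    0 ≤ (M.trace).re ∧ (M.trace).im = 0 := by
  have h : (0:ℂ) ≤ M.trace := Finset.sum_nonneg fun i _ => diag_nonneg hM i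
  rw [Complex.le_def] at h
  exact ⟨by simpa using h.1, (h.2).symm⟩

lemma trace_eq_re {M : Matrix (Fin d) (Fin d) ℂ} (hM : M.PosSemidef) :
    M.trace = ((M.trace).re : ℂ) :=
  Complex.ext (by simp) (by simpa using (trace_re_nonneg hM).2)

/-- `tr(P * ρ)` for `P, ρ` PSD is a nonnegative real. -/
lemma trace_mul_psd (P Q : Matrix (Fin d) (Fin d) ℂ) (hP : P.PosSemidef) (hQ : Q.PosSemidef) :
    (P * Q).trace = (((P * Q).trace).re : ℂ) ∧ 0 ≤ ((P * Q).trace).re := by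
  have hG : hQ.sqrt * hQ.sqrt = Q := hQ.sqrt_mul_self
  have hpsd : (hQ.sqrtᴴ * P * hQ.sqrt).PosSemidef := hP.conjTranspose_mul_mul_same hQ.sqrt
  have h1 : (P * Q).trace = (hQ.sqrtᴴ * P * hQ.sqrt).trace := by
    rw [hQ.posSemidef_sqrt.1]
    conv_lhs => rw [← hG]
    rw [Matrix.trace_mul_comm, Matrix.mul_assoc, Matrix.trace_mul_comm]
  rw [h1]
  exact ⟨trace_eq_re hpsd, (trace_re_nonneg hpsd).1⟩

/-- Cauchy-Schwarz for the Frobenius inner product `tr (Aᴴ B)`. -/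
lemma trace_cs (A B : Matrix (Fin d) (Fin d) ℂ) :
    ((Aᴴ * B).trace).re ≤ Real.sqrt ((Aᴴ * A).trace).re * Real.sqrt ((Bᴴ * B).trace).re := by
  have key : ∀ (C D : Matrix (Fin d) (Fin d) ℂ),
      (@inner ℂ (EuclideanSpace ℂ (Fin d × Fin d)) _
        (WithLp.toLp 2 fun p : Fin d × Fin d => C p.1 p.2)
        (WithLp.toLp 2 fun p : Fin d × Fin d => D p.1 p.2)) = (Cᴴ * D).trace := by
    intro C D
    rw [PiLp.inner_apply, Matrix.trace]
    rw [Fintype.sum_prod_type]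
    rw [Finset.sum_comm]
    simp [Matrix.mul_apply, Matrix.diag, Matrix.conjTranspose_apply, RCLike.inner_apply, mul_comm]
  set f : EuclideanSpace ℂ (Fin d × Fin d) := (WithLp.toLp 2 fun p : Fin d × Fin d => A p.1 p.2) with hf
  set g : EuclideanSpace ℂ (Fin d × Fin d) := (WithLp.toLp 2 fun p : Fin d × Fin d => B p.1 p.2) with hg
  calc ((Aᴴ * B).trace).re = (inner ℂ f g : ℂ).re := by rw [hf, hg, key]
    _ ≤ ‖(inner ℂ f g : ℂ)‖ := Complex.re_le_norm _
    _ ≤ ‖f‖ * ‖g‖ := norm_inner_le_norm f g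
    _ = Real.sqrt ((Aᴴ * A).trace).re * Real.sqrt ((Bᴴ * B).trace).re := by
        rw [@norm_eq_sqrt_re_inner ℂ, @norm_eq_sqrt_re_inner ℂ, ← key A A, ← key B B]
        rfl

/-- `√Λ - Λ` is PSD when `0 ≤ Λ ≤ 1`. -/
lemma sqrt_sub_psd {Λ : Matrix (Fin d) (Fin d) ℂ} (hΛ : Λ.PosSemidef)
    (hΛle : (1 - Λ).PosSemidef) : (hΛ.sqrt - Λ).PosSemidef := by
  set V : Matrix (Fin d) (Fin d) ℂ := (IsHermitian.eigenvectorUnitary hΛ.1 : Matrix (Fin d) (Fin d) ℂ) with hV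
  set μ : Fin d → ℝ := hΛ.1.eigenvalues with hμ
  have h2 : star V * V = 1 := mem_unitaryGroup_iff'.mp (IsHermitian.eigenvectorUnitary hΛ.1).2
  have hμ0 : ∀ i, 0 ≤ μ i := hΛ.eigenvalues_nonneg
  have hdiag : star V * Λ * V = diagonal (RCLike.ofReal ∘ μ) :=
    IsHermitian.star_mul_self_mul_eq_diagonal hΛ.1
  have hμ1 : ∀ i, μ i ≤ 1 := by
    intro i
    have hpsd : (Vᴴ * (1 - Λ) * V).PosSemidef := hΛle.conjTranspose_mul_mul_same V
    have heq : Vᴴ * (1 - Λ) * V = diagonal (fun i => (1 : ℂ) - (μ i : ℂ)) := by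
      rw [← star_eq_conjTranspose, Matrix.mul_sub, Matrix.mul_one, Matrix.sub_mul, h2, hdiag,
        ← Matrix.diagonal_one, Matrix.diagonal_sub]
      rfl
    rw [heq] at hpsd
    have := posSemidef_diagonal_iff.mp hpsd i
    have h01 : ((0:ℂ) ≤ ((1 - μ i : ℝ) : ℂ)) := by push_cast; convert this using 1
    rw [Complex.zero_le_real] at h01
    linarith
  have hsq : hΛ.sqrt = V * diagonal (RCLike.ofReal ∘ Real.sqrt ∘ μ) * star V := rfl
  have hspec : Λ = V * diagonal (RCLike.ofReal ∘ μ) * star V := hΛ.1.spectral_theorem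
  have hsub : hΛ.sqrt - Λ = V * diagonal (fun i => ((Real.sqrt (μ i) - μ i : ℝ) : ℂ)) * star V := by
    rw [hsq]
    conv_lhs => rw [hspec]
    rw [← Matrix.sub_mul, ← Matrix.mul_sub, Matrix.diagonal_sub]
    simp [Complex.ofReal_sub]
  rw [hsub, star_eq_conjTranspose V]
  exact (Matrix.PosSemidef.diagonal (fun i => by
    rw [Pi.zero_apply, Complex.zero_le_real]
    have h1 : Real.sqrt (μ i) ≤ 1 := Real.sqrt_le_one.mpr (hμ1 i)
    have h2 : Real.sqrt (μ i) * Real.sqrt (μ i) = μ i := Real.mul_self_sqrt (hμ0 i)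
    have h3 : 0 ≤ Real.sqrt (μ i) := Real.sqrt_nonneg _
    nlinarith)).mul_mul_conjTranspose_same V

/-- Sign matrix: for Hermitian `M` there is `X` with `Xᴴ = X`, `X * X = 1` and
`traceNorm M = Re tr (X * M)`. -/
lemma exists_sign {M : Matrix (Fin d) (Fin d) ℂ} (hM : M.IsHermitian) :
    ∃ X : Matrix (Fin d) (Fin d) ℂ, Xᴴ = X ∧ X * X = 1 ∧
      traceNorm M = ((X * M).trace).re := by
  set W : Matrix (Fin d) (Fin d) ℂ := (IsHermitian.eigenvectorUnitary hM : Matrix (Fin d) (Fin d) ℂ) with hW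
  set ν : Fin d → ℝ := hM.eigenvalues with hν
  have h1 : W * star W = 1 := mem_unitaryGroup_iff.mp (IsHermitian.eigenvectorUnitary hM).2
  have h2 : star W * W = 1 := mem_unitaryGroup_iff'.mp (IsHermitian.eigenvectorUnitary hM).2
  set sg : Fin d → ℝ := fun i => if ν i < 0 then -1 else 1 with hsg
  set X : Matrix (Fin d) (Fin d) ℂ := W * diagonal (fun i => (sg i : ℂ)) * star W with hX
  have hspec : M = W * diagonal (RCLike.ofReal ∘ ν) * star W := hM.spectral_theorem
  have conjW : ∀ f g : Fin d → ℂ, (W * diagonal f * star W) * (W * diagonal g * star W)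
      = W * diagonal (fun i => f i * g i) * star W := by
    intro f g
    have h2' : ∀ C : Matrix (Fin d) (Fin d) ℂ, star W * (W * C) = C := fun C => by
      rw [← Matrix.mul_assoc, h2, Matrix.one_mul]
    simp only [Matrix.mul_assoc, h2']
    rw [← Matrix.mul_assoc (diagonal f) (diagonal g), Matrix.diagonal_mul_diagonal]
  have traceW : ∀ f : Fin d → ℂ, (W * diagonal f * star W).trace = ∑ i, f i := by
    intro f
    rw [Matrix.trace_mul_cycle, h2, Matrix.one_mul, Matrix.trace_diagonal]
  have hXh : Xᴴ = X := by
    rw [hX, ← star_eq_conjTranspose, Matrix.star_mul, Matrix.star_mul, star_star,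
      star_eq_conjTranspose (diagonal _), Matrix.diagonal_conjTranspose]
    have : star (fun i => ((sg i : ℂ))) = fun i => ((sg i : ℂ)) := by
      funext i
      simp [Complex.star_def, Complex.conj_ofReal]
    rw [this, Matrix.mul_assoc]
  have hsg2 : (fun i => ((sg i : ℂ)) * ((sg i : ℂ))) = fun _ => (1 : ℂ) := by
    funext i
    rw [hsg]
    by_cases h : ν i < 0 <;> simp [h]
  have hX2 : X * X = 1 := by
    rw [hX, conjW, hsg2, Matrix.diagonal_one, Matrix.mul_one, h1]
  refine ⟨X, hXh, hX2, ?_⟩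
  have habs : (fun i => ((sg i : ℂ)) * (RCLike.ofReal ∘ ν) i) = fun i => ((|ν i| : ℝ) : ℂ) := by
    funext i
    show ((sg i : ℂ)) * ((ν i : ℝ) : ℂ) = ((|ν i| : ℝ) : ℂ)
    rw [← Complex.ofReal_mul]
    norm_cast
    rw [hsg]
    by_cases h : ν i < 0
    · simp [h, abs_of_neg h]
    · simp [h, abs_of_nonneg (not_lt.mp h)]
  have hXM : X * M = W * diagonal (fun i => ((|ν i| : ℝ) : ℂ)) * star W := by
    rw [hX]
    conv_lhs => rw [hspec]
    rw [conjW, habs]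
  have hN : (W * diagonal (fun i => ((|ν i| : ℝ) : ℂ)) * star W).PosSemidef := by
    rw [star_eq_conjTranspose W]
    exact (Matrix.PosSemidef.diagonal (fun i => by
      rw [Pi.zero_apply, Complex.zero_le_real]; exact abs_nonneg _)).mul_mul_conjTranspose_same W
  have habs2 : (fun i => ((|ν i| : ℝ) : ℂ) * ((|ν i| : ℝ) : ℂ))
      = fun i => (RCLike.ofReal ∘ ν) i * (RCLike.ofReal ∘ ν) i := by
    funext i
    show ((|ν i| : ℝ) : ℂ) * ((|ν i| : ℝ) : ℂ) = ((ν i : ℝ) : ℂ) * ((ν i : ℝ) : ℂ)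
    rw [← Complex.ofReal_mul, ← Complex.ofReal_mul, ← abs_mul, abs_mul_self]
  have hsq : (W * diagonal (fun i => ((|ν i| : ℝ) : ℂ)) * star W) ^ 2 = Mᴴ * M := by
    rw [hM.eq, pow_two, conjW, habs2, ← conjW]
    conv_rhs => rw [hspec]
  have hsqrt := Matrix.PosSemidef.eq_sqrt_of_sq_eq hN (Matrix.posSemidef_conjTranspose_mul_self M) hsq
  rw [traceNorm, ← hsqrt, hXM, traceW]

lemma trGYG (G Y : Matrix (Fin d) (Fin d) ℂ) :
    (G * Y * G).trace = (Y * (G * G)).trace := by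
  rw [Matrix.trace_mul_cycle, Matrix.trace_mul_comm]

end GentleAux

/-- **Gentle Measurement Lemma.** If `ρ` is a density matrix, `0 ≤ Λ ≤ 1` and
`Re tr(Λρ) ≥ 1 - δ` with `tr(Λρ) ≠ 0`, then the normalized post-measurement state
`(√Λ ρ √Λ) / tr(Λρ)` is `2√δ`-close to `ρ` in trace norm. -/
theorem gentle_measurement {d : ℕ} (ρ Λ : Matrix (Fin d) (Fin d) ℂ)
    (hρ : ρ.PosSemidef) (hρtr : ρ.trace = 1)
    (hΛ : Λ.PosSemidef) (hΛle : (1 - Λ).PosSemidef)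
    (δ : ℝ) (hδ0 : 0 ≤ δ) (hδ1 : δ ≤ 1)
    (htr : 1 - δ ≤ ((Λ * ρ).trace).re)
    (hne : (Λ * ρ).trace ≠ 0) :
    traceNorm (ρ - ((Λ * ρ).trace)⁻¹ • (hΛ.sqrt * ρ * hΛ.sqrt)) ≤ 2 * Real.sqrt δ := by
  classical
  set S := hΛ.sqrt with hSdef
  have hS : S.PosSemidef := hΛ.posSemidef_sqrt
  have hSS : S * S = Λ := hΛ.sqrt_mul_self
  set G := hρ.sqrt with hGdef
  have hGpsd : G.PosSemidef := hρ.posSemidef_sqrt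
  have hG : Gᴴ = G := hGpsd.1
  have hGG : G * G = ρ := hρ.sqrt_mul_self
  have htreal := GentleAux.trace_mul_psd Λ ρ hΛ hρ
  set t₀ : ℝ := ((Λ * ρ).trace).re with ht₀
  have ht : (Λ * ρ).trace = (t₀ : ℂ) := htreal.1
  have ht0 : 0 < t₀ := by
    rcases lt_or_eq_of_le htreal.2 with h | h
    · exact h
    · exact absurd (by rw [ht, ← h]; simp) hne
  set r : ℝ := Real.sqrt t₀ with hr
  have hr0 : 0 < r := Real.sqrt_pos.mpr ht0
  have hr2 : r * r = t₀ := Real.mul_self_sqrt ht0.le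
  set A : Matrix (Fin d) (Fin d) ℂ := ((r : ℂ))⁻¹ • S with hA
  have hAh : Aᴴ = A := by
    rw [hA, Matrix.conjTranspose_smul, hS.1]
    congr 1
    rw [← Complex.ofReal_inv]
    exact Complex.conj_ofReal _
  have hrr : ((r : ℂ))⁻¹ * ((r : ℂ))⁻¹ = ((Λ * ρ).trace)⁻¹ := by
    rw [ht, ← mul_inv, ← Complex.ofReal_mul, hr2]
  have hAA : A * A = ((Λ * ρ).trace)⁻¹ • Λ := by
    rw [hA, Matrix.smul_mul, Matrix.mul_smul, smul_smul, hrr, hSS]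
  have hArA : A * ρ * A = ((Λ * ρ).trace)⁻¹ • (S * ρ * S) := by
    rw [hA, Matrix.smul_mul, Matrix.smul_mul, Matrix.mul_smul, smul_smul, hrr]
  rw [← hArA]
  -- the matrix M = ρ - AρA is Hermitian
  have hMh : (ρ - A * ρ * A).IsHermitian := by
    have h1 : (A * ρ * A)ᴴ = A * ρ * A := by
      rw [Matrix.conjTranspose_mul, Matrix.conjTranspose_mul, hAh, hρ.1.eq, Matrix.mul_assoc]
    exact hρ.1.sub h1
  obtain ⟨X, hXh, hX2, hXnorm⟩ := GentleAux.exists_sign hMh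
  set P : Matrix (Fin d) (Fin d) ℂ := G - A * G with hPdef
  set Q : Matrix (Fin d) (Fin d) ℂ := G + A * G with hQdef
  have hPh : Pᴴ = G - G * A := by
    rw [hPdef, Matrix.conjTranspose_sub, Matrix.conjTranspose_mul, hAh, hG]
  have hQh : Qᴴ = G + G * A := by
    rw [hQdef, Matrix.conjTranspose_add, Matrix.conjTranspose_mul, hAh, hG]
  -- traces
  have hsρ := GentleAux.trace_mul_psd S ρ hS hρ
  set s : ℝ := ((S * ρ).trace).re with hs
  have hs0 : 0 ≤ s := hsρ.2
  have hAρtr : (A * ρ).trace = ((r⁻¹ * s : ℝ) : ℂ) := by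
    rw [hA, Matrix.smul_mul, Matrix.trace_smul, hsρ.1, smul_eq_mul]
    push_cast
    ring
  set c : ℝ := r⁻¹ * s with hc
  have hAAρtr : (A * A * ρ).trace = 1 := by
    rw [hAA, Matrix.smul_mul, Matrix.trace_smul, smul_eq_mul, inv_mul_cancel₀ hne]
  -- trace of PᴴP and QᴴQ
  have e1 : Pᴴ * P = G * G - G * A * G - G * A * G + G * (A * A) * G := by
    rw [hPh, hPdef]; noncomm_ring
  have e2 : Qᴴ * Q = G * G + G * A * G + G * A * G + G * (A * A) * G := by
    rw [hQh, hQdef]; noncomm_ring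
  have hPPtr : ((Pᴴ * P).trace).re = 2 - 2 * c := by
    rw [e1, Matrix.trace_add, Matrix.trace_sub, Matrix.trace_sub,
      GentleAux.trGYG G A, GentleAux.trGYG G (A * A), hGG, hρtr, hAρtr, hAAρtr]
    simp [Complex.sub_re, Complex.add_re]
    ring
  have hQQtr : ((Qᴴ * Q).trace).re = 2 + 2 * c := by
    rw [e2, Matrix.trace_add, Matrix.trace_add, Matrix.trace_add,
      GentleAux.trGYG G A, GentleAux.trGYG G (A * A), hGG, hρtr, hAρtr, hAAρtr]
    simp [Complex.add_re]
    ring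
  -- the middle identity
  have e3 : Pᴴ * (X * Q) = G * X * G + G * (X * A) * G - G * (A * X) * G
      - G * (A * X * A) * G := by
    rw [hPh, hQdef]; noncomm_ring
  have e4 : (X * (ρ - A * ρ * A)).trace = (X * ρ).trace - (A * X * A * ρ).trace := by
    rw [Matrix.mul_sub, Matrix.trace_sub]
    congr 1
    rw [← Matrix.mul_assoc, ← Matrix.mul_assoc, Matrix.trace_mul_cycle,
      ← Matrix.mul_assoc A X A]
  have hconj : ((X * A * ρ).trace).re = ((A * X * ρ).trace).re := by
    have h5 : (X * A * ρ)ᴴ = ρ * (A * X) := by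
      rw [Matrix.conjTranspose_mul, Matrix.conjTranspose_mul, hAh, hXh, hρ.1.eq]
    have h6 : (ρ * (A * X)).trace = star ((X * A * ρ).trace) := by
      rw [← h5]; exact Matrix.trace_conjTranspose _
    have h7 : (A * X * ρ).trace = (ρ * (A * X)).trace := by
      rw [Matrix.trace_mul_comm]
    rw [h7, h6, Complex.star_def, Complex.conj_re]
  have hmid : ((X * (ρ - A * ρ * A)).trace).re = ((Pᴴ * (X * Q)).trace).re := by
    rw [e3, Matrix.trace_sub, Matrix.trace_sub, Matrix.trace_add,
      GentleAux.trGYG G X, GentleAux.trGYG G (X * A), GentleAux.trGYG G (A * X),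
      GentleAux.trGYG G (A * X * A), hGG, e4]
    simp only [Complex.sub_re, Complex.add_re]
    have := hconj
    linarith
  -- Cauchy-Schwarz
  have hCS := GentleAux.trace_cs P (X * Q)
  have hXQ : (X * Q)ᴴ * (X * Q) = Qᴴ * Q := by
    rw [Matrix.conjTranspose_mul, hXh, Matrix.mul_assoc, ← Matrix.mul_assoc X X, hX2,
      Matrix.one_mul]
  rw [hXQ, hPPtr, hQQtr] at hCS
  -- positivity of the two factors
  have hPPnn : 0 ≤ 2 - 2 * c := by
    rw [← hPPtr]
    exact (GentleAux.trace_re_nonneg (Matrix.posSemidef_conjTranspose_mul_self P)).1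
  have hQQnn : 0 ≤ 2 + 2 * c := by
    rw [← hQQtr]
    exact (GentleAux.trace_re_nonneg (Matrix.posSemidef_conjTranspose_mul_self Q)).1
  -- lower bound on s
  have hst : t₀ ≤ s := by
    have h8 := GentleAux.trace_mul_psd (S - Λ) ρ (GentleAux.sqrt_sub_psd hΛ hΛle) hρ
    have h9 : ((S - Λ) * ρ).trace = (S * ρ).trace - (Λ * ρ).trace := by
      rw [Matrix.sub_mul, Matrix.trace_sub]
    have := h8.2
    rw [h9] at this
    simp only [Complex.sub_re] at this
    rw [← hs, ← ht₀] at this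
    linarith
  -- final arithmetic
  rw [hXnorm]
  calc ((X * (ρ - A * ρ * A)).trace).re
      ≤ Real.sqrt (2 - 2 * c) * Real.sqrt (2 + 2 * c) := by rw [hmid]; exact hCS
    _ = Real.sqrt ((2 - 2 * c) * (2 + 2 * c)) := (Real.sqrt_mul hPPnn _).symm
    _ ≤ Real.sqrt (4 * δ) := by
        apply Real.sqrt_le_sqrt
        have hcr : c * r = s := by
          rw [hc]; field_simp
        nlinarith [mul_le_mul hst hst ht0.le hs0, sq_nonneg c, sq_nonneg r]
    _ = 2 * Real.sqrt δ := by
        rw [Real.sqrt_mul (by norm_num : (0:ℝ) ≤ 4) δ]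
        have h4 : Real.sqrt 4 = 2 := by
          rw [show (4:ℝ) = 2 ^ 2 by norm_num, Real.sqrt_sq (by norm_num : (0:ℝ) ≤ 2)]
        rw [h4]
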